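/- Let μ be a probability measure with compact support in [0, b], with Stieltjes transform m(x) on (b, ∞), let c > 0 and ν a probability measure with support in [0, b_ν] such that m satisfies m(x) = (−x + ∫ t/(1 + c m(x) t) dν(t))^{-1} for x > b and 1 + c m(x) t > 0 on the support of ν. Define Δ(x) = 1 − c ∫ (m(x) t/(1 + c m(x) t))² dν(t). Then m'(x) = m(x)²/Δ(x) and Δ(x) > 0 for all x > b. -/

import Mathlib

open MeasureTheory Set Filter

lemma stmt9_aux (μ : Measure ℝ) [IsProbabilityMeasure μ] {b y : ℝ} (hb0 : 0 < b) (hy : b < y)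
    (hae : ∀ᵐ t ∂μ, t ∈ Icc 0 b) :
    Integrable (fun t => 1 / (t - y)) μ ∧ (∫ t, 1 / (t - y) ∂μ) < 0 := by
  have hy0 : 0 < y := hb0.trans hy
  have hmeas : Measurable fun t : ℝ => 1 / (t - y) :=
    measurable_const.div (measurable_id.sub_const y)
  have hint : Integrable (fun t => 1 / (t - y)) μ := by
    refine Integrable.mono' (integrable_const ((y - b)⁻¹)) hmeas.aestronglyMeasurable ?_
    filter_upwards [hae] with t ht
    rw [Real.norm_eq_abs, abs_div, abs_one, abs_of_neg (by linarith [ht.2] : t - y < 0)]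
    rw [one_div]
    exact inv_anti₀ (by linarith) (by linarith [ht.2])
  refine ⟨hint, ?_⟩
  have hb1 : ∀ᵐ t ∂μ, 1 / (t - y) ≤ -y⁻¹ := by
    filter_upwards [hae] with t ht
    have h1 : t - y < 0 := by linarith [ht.2]
    rw [div_le_iff_of_neg h1]
    have hyy : y * y⁻¹ = 1 := mul_inv_cancel₀ (ne_of_gt hy0)
    have h2 : 0 ≤ y⁻¹ * t := mul_nonneg (inv_nonneg.mpr hy0.le) ht.1
    nlinarith
  have hm := integral_mono_ae hint (integrable_const (-y⁻¹)) hb1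
  rw [integral_const] at hm
  simp only [probReal_univ, measure_univ, ENNReal.toReal_one, one_smul] at hm
  have h3 : (0:ℝ) < y⁻¹ := inv_pos.mpr hy0
  linarith

/-- If m is the Stieltjes transform of a probability measure μ supported
in [0,b] and satisfies the fixed-point equation
m(x) = (−x + ∫ t/(1 + c m(x) t) dν(t))⁻¹ on (b,∞), with 1 + c m(x) t bounded away
from 0 on supp(ν), then, defining Δ(x) = 1 − c ∫ (m(x) t/(1 + c m(x) t))² dν(t),
one has Δ(x) > 0 and m'(x) = m(x)²/Δ(x) for all x > b. -/
theorem stmt9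
    (μ ν : Measure ℝ) [IsProbabilityMeasure μ] [IsProbabilityMeasure ν]
    (b bν c : ℝ) (hb : 0 < b) (hbν : 0 < bν) (hc : 0 < c)
    (hsuppμ : μ (Icc 0 b)ᶜ = 0) (hsuppν : ν (Icc 0 bν)ᶜ = 0)
    (m : ℝ → ℝ)
    (hst : ∀ x ∈ Ioi b, m x = ∫ t, 1 / (t - x) ∂μ)
    (hpos : ∀ x ∈ Ioi b, ∃ δ > 0, ∀ t ∈ Icc 0 bν, δ ≤ 1 + c * m x * t)
    (hfix : ∀ x ∈ Ioi b, m x = (-x + ∫ t, t / (1 + c * m x * t) ∂ν)⁻¹)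
    (Δ : ℝ → ℝ)
    (hΔ : ∀ x ∈ Ioi b, Δ x = 1 - c * ∫ t, (m x * t / (1 + c * m x * t)) ^ 2 ∂ν) :
    ∀ x ∈ Ioi b, 0 < Δ x ∧ HasDerivAt m (m x ^ 2 / Δ x) x := by
  have hμae : ∀ᵐ t ∂μ, t ∈ Icc 0 b := by
    rw [ae_iff]; simpa [Set.compl_def] using hsuppμ
  have hνae : ∀ᵐ t ∂ν, t ∈ Icc 0 bν := by
    rw [ae_iff]; simpa [Set.compl_def] using hsuppν
  have hmneg : ∀ y ∈ Ioi b, m y < 0 := by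
    intro y hy
    rw [hst y hy]
    exact (stmt9_aux μ hb hy hμae).2
  intro x hx
  have hxb : b < x := hx
  have hx0 : 0 < x := hb.trans hxb
  have hmx : m x < 0 := hmneg x hx
  have hmx0 : m x ≠ 0 := ne_of_lt hmx
  have hM : 0 < m x ^ 2 := by nlinarith
  -- Step A : derivative of the Stieltjes transform
  set ε := (x - b) / 2 with hεdef
  have hε : 0 < ε := by rw [hεdef]; linarith
  have hkey : ∀ t ∈ Icc 0 b, ∀ y ∈ Metric.ball x ε, ε ≤ y - t := by
    intro t ht y hyb
    rw [Metric.mem_ball, Real.dist_eq, abs_lt] at hyb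
    have h2 := ht.2
    have h3 := hyb.1
    rw [hεdef] at *
    linarith
  have hA := hasDerivAt_integral_of_dominated_loc_of_deriv_le (μ := μ) (x₀ := x)
      (F := fun y t => 1 / (t - y)) (F' := fun y t => 1 / ((t - y) ^ 2))
      (bound := fun _ => (ε ^ 2)⁻¹) (Metric.ball_mem_nhds x hε)
      (Eventually.of_forall fun y =>
        (measurable_const.div (measurable_id.sub_const y)).aestronglyMeasurable)
      (stmt9_aux μ hb hxb hμae).1
      ((measurable_const.div ((measurable_id.sub_const x).pow_const 2)).aestronglyMeasurable)
      (by
        filter_upwards [hμae] with t ht y hyb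
        have h1 := hkey t ht y hyb
        have habs : ε ≤ |t - y| := by
          rw [abs_sub_comm]; exact h1.trans (le_abs_self _)
        rw [Real.norm_eq_abs, abs_div, abs_one, abs_pow, one_div]
        exact inv_anti₀ (by positivity) (by nlinarith))
      (integrable_const _)
      (by
        filter_upwards [hμae] with t ht y hyb
        have h1 := hkey t ht y hyb
        have hne : t - y ≠ 0 := ne_of_lt (by linarith)
        have h2 : HasDerivAt (fun y : ℝ => t - y) (-1) y := (hasDerivAt_id y).const_sub t
        have h3 := h2.inv hne
        simpa [one_div, Pi.inv_def] using h3)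
  obtain ⟨hDint, hD⟩ := hA
  set D := ∫ t, 1 / ((t - x) ^ 2) ∂μ with hDdef
  have hDpos : 0 < D := by
    have hbnd : ∀ᵐ t ∂μ, (x ^ 2)⁻¹ ≤ 1 / ((t - x) ^ 2) := by
      filter_upwards [hμae] with t ht
      have h1 : t - x ≠ 0 := ne_of_lt (by linarith [ht.2])
      rw [one_div]
      exact inv_anti₀ (by positivity) (by nlinarith [ht.1, ht.2])
    have h2 := integral_mono_ae (integrable_const ((x ^ 2)⁻¹)) hDint hbnd
    rw [integral_const] at h2
    simp only [probReal_univ, measure_univ, ENNReal.toReal_one, one_smul] at h2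
    have h3 : (0:ℝ) < (x ^ 2)⁻¹ := by positivity
    rw [hDdef]; linarith
  have hmderiv : HasDerivAt m D x := by
    apply hD.congr_of_eventuallyEq
    filter_upwards [isOpen_Ioi.mem_nhds hx] with y hy using hst y hy
  -- Step C : derivative of the fixed point integral
  obtain ⟨δ, hδ, hδb⟩ := hpos x hx
  set εs := δ / (2 * c * bν) with hεsdef
  have hεs : 0 < εs := by rw [hεsdef]; positivity
  have hball : ∀ t ∈ Icc 0 bν, ∀ s ∈ Metric.ball (m x) εs, δ / 2 ≤ 1 + c * s * t := by
    intro t ht s hs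
    rw [Metric.mem_ball, Real.dist_eq] at hs
    have hst1 : |c * (s - m x) * t| ≤ δ / 2 := by
      rw [abs_mul, abs_mul, abs_of_pos hc, abs_of_nonneg ht.1]
      have h1 : c * |s - m x| * t ≤ c * εs * bν := by
        apply mul_le_mul _ ht.2 ht.1 (by positivity)
        exact mul_le_mul_of_nonneg_left hs.le hc.le
      have hval : c * εs * bν = δ / 2 := by
        rw [hεsdef]; field_simp
      linarith
    have h4 : -(δ / 2) ≤ c * (s - m x) * t := by
      have := neg_abs_le (c * (s - m x) * t); linarith
    have h5 : c * s * t = c * m x * t + c * (s - m x) * t := by ring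
    have h6 := hδb t ht
    linarith
  have hC := hasDerivAt_integral_of_dominated_loc_of_deriv_le (μ := ν) (x₀ := m x)
      (F := fun s t => t / (1 + c * s * t))
      (F' := fun s t => -(c * (t ^ 2 / (1 + c * s * t) ^ 2)))
      (bound := fun _ => c * (bν ^ 2 / (δ / 2) ^ 2)) (Metric.ball_mem_nhds (m x) hεs)
      (Eventually.of_forall fun s =>
        (measurable_id.div ((measurable_id.const_mul (c * s)).const_add 1)).aestronglyMeasurable)
      (by
        refine Integrable.mono' (integrable_const (bν / δ)) ?_ ?_
        · exact (measurable_id.div ((measurable_id.const_mul (c * m x)).const_add 1)).aestronglyMeasurable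
        · filter_upwards [hνae] with t ht
          have h1 := hδb t ht
          rw [Real.norm_eq_abs, abs_div, abs_of_nonneg ht.1, abs_of_pos (by linarith)]
          exact div_le_div₀ hbν.le ht.2 hδ h1)
      (((measurable_const.mul (((measurable_id.pow_const 2)).div
          (((measurable_id.const_mul (c * m x)).const_add 1).pow_const 2))).neg).aestronglyMeasurable)
      (by
        filter_upwards [hνae] with t ht s hs
        have hA2 := hball t ht s hs
        rw [norm_neg, Real.norm_eq_abs, abs_mul, abs_of_pos hc,
          abs_of_nonneg (by positivity : (0:ℝ) ≤ t ^ 2 / (1 + c * s * t) ^ 2)]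
        have hd : (δ / 2) ^ 2 ≤ (1 + c * s * t) ^ 2 := by nlinarith
        have hnum : t ^ 2 ≤ bν ^ 2 := by nlinarith [ht.1, ht.2]
        exact mul_le_mul_of_nonneg_left (div_le_div₀ (by positivity) hnum (by positivity) hd) hc.le)
      (integrable_const _)
      (by
        filter_upwards [hνae] with t ht s hs
        have hA2 := hball t ht s hs
        have hne : 1 + c * s * t ≠ 0 := ne_of_gt (by linarith)
        have h1 : HasDerivAt (fun s : ℝ => 1 + c * s * t) (c * t) s := by
          simpa using (((hasDerivAt_id s).const_mul c).mul_const t).const_add 1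
        have h3 := (h1.inv hne).const_mul t
        have h4 : HasDerivAt (fun s => t / (1 + c * s * t))
            (t * (-(c * t) / (1 + c * s * t) ^ 2)) s := by
          simpa [div_eq_mul_inv, Pi.inv_def] using h3
        exact h4.congr_deriv (by ring))
  obtain ⟨hGint, hG⟩ := hC
  set I₂ := ∫ t, t ^ 2 / (1 + c * m x * t) ^ 2 ∂ν with hI₂def
  have hGval : (∫ t, -(c * (t ^ 2 / (1 + c * m x * t) ^ 2)) ∂ν) = -(c * I₂) := by
    rw [integral_neg, integral_const_mul]
  rw [hGval] at hG
  -- chain rule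
  have hcomp := hG.comp x hmderiv
  have hinv := hmderiv.inv hmx0
  have hH := hcomp.sub hinv
  have hHeq : ((fun s => ∫ t, t / (1 + c * s * t) ∂ν) ∘ m - fun y => (m y)⁻¹) =ᶠ[nhds x]
      fun y => y := by
    filter_upwards [isOpen_Ioi.mem_nhds hx] with y hy
    have h5 : (m y)⁻¹ = -y + ∫ t, t / (1 + c * m y * t) ∂ν := by
      conv_lhs => rw [hfix y hy]
      rw [inv_inv]
    simp only [Pi.sub_apply, Function.comp_apply]
    rw [h5]; ring
  have hone : -(c * I₂) * D - -D / m x ^ 2 = 1 := by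
    have h7 := hH.congr_of_eventuallyEq hHeq.symm
    exact h7.unique (hasDerivAt_id x)
  -- Δ computation
  have hint_eq : (∫ t, (m x * t / (1 + c * m x * t)) ^ 2 ∂ν) = m x ^ 2 * I₂ := by
    rw [hI₂def, ← integral_const_mul]
    apply integral_congr_ae
    filter_upwards with t
    rw [div_pow, mul_pow, mul_div_assoc]
  have hΔx : Δ x = 1 - c * (m x ^ 2 * I₂) := by rw [hΔ x hx, hint_eq]
  have hM0 : (m x) ^ 2 ≠ 0 := ne_of_gt hM
  have h7 : (-(c * I₂) * D - (-D) / (m x) ^ 2) * (m x) ^ 2 = (m x) ^ 2 := by rw [hone]; ring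
  have h8 : ((-D) / (m x) ^ 2) * (m x) ^ 2 = -D := div_mul_cancel₀ _ hM0
  have hDM : Δ x * D = m x ^ 2 := by
    rw [hΔx]; linear_combination h7 + h8
  have hΔpos : 0 < Δ x := by nlinarith
  refine ⟨hΔpos, ?_⟩
  have hval : m x ^ 2 / Δ x = D := by
    rw [← hDM]; exact mul_div_cancel_left₀ D (ne_of_gt hΔpos)
  rw [hval]; exact hmderiv
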